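/- Let f be a rational function (quotient of polynomials with complex coefficients) and suppose |f(z)| = 1 for all z on the unit circle where f is defined. Then f is a quotient of two finite Blaschke products. -/

import Mathlib

open Polynomial

local notation "conj'" => starRingEnd ℂ

lemma eval_map_conj (p : Polynomial ℂ) (z : ℂ) :
    (p.map (starRingEnd ℂ)).eval z = conj' (p.eval (conj' z)) := by
  conv_lhs => rw [eval_map, show z = conj' (conj' z) from (Complex.conj_conj z).symm,
    eval₂_at_apply]

lemma reverse_eval (q : Polynomial ℂ) {z : ℂ} (hz : z ≠ 0) :
    (reverse q).eval z = z ^ q.natDegree * q.eval z⁻¹ := by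
  letI : Invertible (z⁻¹) := invertibleOfNonzero (inv_ne_zero hz)
  have h := Polynomial.eval₂_reverse_mul_pow (RingHom.id ℂ) (z⁻¹) q
  rw [invOf_eq_inv, inv_inv] at h
  have e : ∀ (x : ℂ) (p : Polynomial ℂ), eval₂ (RingHom.id ℂ) x p = p.eval x := fun x p => by
    simpa using eval₂_at_apply (p := p) (RingHom.id ℂ) x
  rw [e, e] at h
  rw [← h, mul_comm ((reverse q).eval z), ← mul_assoc, ← mul_pow, mul_inv_cancel₀ hz,
    one_pow, one_mul]

/-- A finite Blaschke product: `B(z) = λ · ∏ (z - aₖ)/(1 - conj(aₖ)·z)` with `|λ| = 1`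
and `|aₖ| < 1`, viewed as a function on the closed unit disk. -/
def IsFiniteBlaschke (B : ℂ → ℂ) : Prop :=
  ∃ (n : ℕ) (lam : ℂ) (a : Fin n → ℂ),
    ‖lam‖ = 1 ∧ (∀ k, ‖a k‖ < 1) ∧
    ∀ z : ℂ, ‖z‖ ≤ 1 →
      B z = lam * ∏ k, (z - a k) / (1 - (starRingEnd ℂ) (a k) * z)

lemma blaschke_const {c : ℂ} (hc : ‖c‖ = 1) : IsFiniteBlaschke (fun _ => c) :=
  ⟨0, c, Fin.elim0, hc, fun k => k.elim0, fun z _ => by simp⟩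

lemma blaschke_mul {B : ℂ → ℂ} (hB : IsFiniteBlaschke B) {μ a : ℂ}
    (hμ : ‖μ‖ = 1) (ha : ‖a‖ < 1) :
    IsFiniteBlaschke (fun z => μ * ((z - a) / (1 - conj' a * z)) * B z) := by
  obtain ⟨n, lam, v, hlam, hv, hBe⟩ := hB
  refine ⟨n + 1, μ * lam, Fin.cons a v, by rw [norm_mul, hμ, hlam, one_mul], ?_, fun z hz => ?_⟩
  · intro k
    induction k using Fin.cases with
    | zero => simpa using ha
    | succ i => simpa using hv i
  · show μ * ((z - a) / (1 - conj' a * z)) * B z = _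
    rw [hBe z hz, Fin.prod_univ_succ]
    simp only [Fin.cons_zero, Fin.cons_succ]
    ring

-- circle facts
lemma abs_one_sub_conj {a z : ℂ} (hz : ‖z‖ = 1) :
    ‖1 - conj' a * z‖ = ‖z - a‖ := by
  have h1 : z * conj' z = 1 := by
    rw [Complex.mul_conj, Complex.normSq_eq_norm_sq, hz] ; norm_num
  have : 1 - conj' a * z = z * (conj' z - conj' a) := by
    rw [mul_sub, h1]; ring
  rw [this, norm_mul, hz, one_mul, ← map_sub conj', Complex.norm_conj]

lemma abs_sub_inv_conj {a z : ℂ} (ha : a ≠ 0) (hz : ‖z‖ = 1) :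
    ‖z - (conj' a)⁻¹‖ = ‖z - a‖ / ‖a‖ := by
  have hca : conj' a ≠ 0 := by simpa using ha
  have : z - (conj' a)⁻¹ = -(1 - conj' a * z) / conj' a := by
    field_simp; ring
  rw [this, norm_div, norm_neg, abs_one_sub_conj hz, Complex.norm_conj]

lemma one_sub_conj_ne {a z : ℂ} (ha : ‖a‖ < 1) (hz : ‖z‖ ≤ 1) :
    1 - conj' a * z ≠ 0 := by
  intro h
  have : conj' a * z = 1 := by linear_combination -h
  have habs : ‖conj' a * z‖ = 1 := by rw [this, norm_one]
  rw [norm_mul, Complex.norm_conj] at habs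
  nlinarith [norm_nonneg z, norm_nonneg a]

lemma circle_infinite : {z : ℂ | ‖z‖ = 1}.Infinite := by
  have hinj : Set.InjOn (fun t : ℝ => Complex.exp (t * Complex.I)) (Set.Ico 0 (2 * Real.pi)) := by
    intro s hs t ht hst
    rw [Complex.exp_eq_exp_iff_exists_int] at hst
    obtain ⟨n, hn⟩ := hst
    have hn2 : (s : ℂ) * Complex.I = ((t + n * (2 * Real.pi) : ℝ) : ℂ) * Complex.I := by
      push_cast
      linear_combination hn
    have hn' : (s : ℂ) = ((t + n * (2 * Real.pi) : ℝ) : ℂ) :=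
      mul_right_cancel₀ Complex.I_ne_zero hn2
    have hs' : s = t + n * (2 * Real.pi) := by exact_mod_cast hn'
    obtain ⟨hs0, hs1⟩ := hs
    obtain ⟨ht0, ht1⟩ := ht
    have hpi := Real.pi_pos
    have : n = 0 := by
      rcases lt_trichotomy n 0 with h | h | h
      · exfalso
        have hn1 : n ≤ -1 := by omega
        have : (n : ℝ) ≤ -1 := by exact_mod_cast hn1
        nlinarith
      · exact h
      · exfalso; have : (1 : ℝ) ≤ (n : ℝ) := by exact_mod_cast h
        nlinarith
    rw [this] at hs'; simpa using hs'
  have h1 : (Set.Ico (0:ℝ) (2 * Real.pi)).Infinite :=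
    Set.Ico_infinite (by positivity)
  have h2 := (h1.image hinj)
  apply h2.mono
  rintro w ⟨t, _, rfl⟩
  simp [Complex.norm_exp]

def Hyp (P Q : Polynomial ℂ) : Prop :=
  {z : ℂ | ‖z‖ = 1 ∧ ‖P.eval z‖ = ‖Q.eval z‖}.Infinite

def Concl (P Q : Polynomial ℂ) : Prop :=
  ∃ B₁ B₂ : ℂ → ℂ, IsFiniteBlaschke B₁ ∧ IsFiniteBlaschke B₂ ∧
    ∀ z : ℂ, ‖z‖ ≤ 1 → P.eval z * B₂ z = Q.eval z * B₁ z

lemma hyp_symm {P Q : Polynomial ℂ} (h : Hyp P Q) : Hyp Q P := by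
  apply h.mono
  rintro z ⟨h1, h2⟩
  exact ⟨h1, h2.symm⟩

lemma hyp_identity {P Q : Polynomial ℂ} (h : Hyp P Q) :
    P * reverse (P.map (starRingEnd ℂ)) * X ^ Q.natDegree
      = Q * reverse (Q.map (starRingEnd ℂ)) * X ^ P.natDegree := by
  apply eq_of_infinite_eval_eq
  apply h.mono
  rintro z ⟨hz1, hz2⟩
  have hz0 : z ≠ 0 := by intro h0; rw [h0] at hz1; simp at hz1
  have hzc : conj' (z⁻¹) = z := by
    rw [map_inv₀]
    have h1 : z * conj' z = 1 := by
      rw [Complex.mul_conj, Complex.normSq_eq_norm_sq, hz1]; norm_num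
    have h2 : conj' z = z⁻¹ := by
      field_simp
      linear_combination h1
    rw [h2, inv_inv]
  have key : ∀ R : Polynomial ℂ,
      (reverse (R.map (starRingEnd ℂ))).eval z
        = z ^ R.natDegree * conj' (R.eval z) := by
    intro R
    rw [reverse_eval _ hz0, Polynomial.natDegree_map (starRingEnd ℂ), eval_map_conj, hzc]
  have habs : ∀ R : Polynomial ℂ,
      R.eval z * conj' (R.eval z) = ((‖R.eval z‖) ^ 2 : ℝ) := by
    intro R
    rw [Complex.mul_conj, Complex.normSq_eq_norm_sq]
  simp only [Set.mem_setOf_eq, eval_mul, eval_pow, eval_X, key]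
  calc P.eval z * (z ^ P.natDegree * conj' (P.eval z)) * z ^ Q.natDegree
      = (P.eval z * conj' (P.eval z)) * (z ^ P.natDegree * z ^ Q.natDegree) := by ring
    _ = (Q.eval z * conj' (Q.eval z)) * (z ^ P.natDegree * z ^ Q.natDegree) := by
        rw [habs, habs, hz2]
    _ = Q.eval z * (z ^ Q.natDegree * conj' (Q.eval z)) * z ^ P.natDegree := by ring

lemma key_root {P Q : Polynomial ℂ} (h : Hyp P Q) {a : ℂ} (ha : a ≠ 0)
    (hPa : P.eval a = 0) : Q.eval a = 0 ∨ Q.eval ((conj' a)⁻¹) = 0 := by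
  have E := hyp_identity h
  have E2 := congrArg (Polynomial.eval a) E
  simp only [eval_mul, eval_pow, eval_X, hPa, zero_mul, mul_zero] at E2
  have han : a ^ P.natDegree ≠ 0 := pow_ne_zero _ ha
  rcases mul_eq_zero.mp E2.symm with h1 | h2
  · rcases mul_eq_zero.mp h1 with h3 | h4
    · exact Or.inl h3
    · right
      rw [reverse_eval _ ha, eval_map_conj, map_inv₀] at h4
      rcases mul_eq_zero.mp h4 with h5 | h6
      · exact absurd h5 (pow_ne_zero _ ha)
      · have h7 := congrArg conj' h6
        rwa [Complex.conj_conj, map_zero] at h7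
  · exact absurd h2 han

lemma base (P Q : Polynomial ℂ) (hP : P ≠ 0) (hQ : Q ≠ 0) (hdP : P.natDegree = 0)
    (hdQ : Q.natDegree = 0) (hyp : Hyp P Q) : Concl P Q := by
  have hPc := Polynomial.eq_C_of_natDegree_eq_zero hdP
  have hQc := Polynomial.eq_C_of_natDegree_eq_zero hdQ
  set c := P.coeff 0
  set d := Q.coeff 0
  have hc : c ≠ 0 := fun h => hP (by rw [hPc, h, map_zero])
  have hd : d ≠ 0 := fun h => hQ (by rw [hQc, h, map_zero])
  obtain ⟨z, _, hz2⟩ := hyp.nonempty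
  rw [hPc, hQc, eval_C, eval_C] at hz2
  refine ⟨fun _ => 1, fun _ => d / c, blaschke_const (by simp),
    blaschke_const (by rw [norm_div, hz2, div_self]; simpa using hd), fun w _ => ?_⟩
  rw [hPc, hQc, eval_C, eval_C]
  field_simp

lemma step (n : ℕ)
    (ih : ∀ P Q : Polynomial ℂ, P ≠ 0 → Q ≠ 0 → P.natDegree + Q.natDegree ≤ n →
      Hyp P Q → Concl P Q)
    (P Q : Polynomial ℂ) (hP : P ≠ 0) (hQ : Q ≠ 0) (hd : 1 ≤ P.natDegree)
    (hsum : P.natDegree + Q.natDegree ≤ n + 1) (hyp : Hyp P Q) : Concl P Q := by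
  have hdeg : 0 < P.degree := natDegree_pos_iff_degree_pos.mp hd
  obtain ⟨a, haR⟩ := Complex.exists_root hdeg
  by_cases ha0 : a = 0
  · -- root at zero
    subst ha0
    have hc : P.coeff 0 = 0 := by rw [coeff_zero_eq_eval_zero]; exact haR
    have hPX : X * P.divX = P := by
      conv_rhs => rw [← Polynomial.X_mul_divX_add P]
      rw [hc, map_zero, add_zero]
    have hP1 : P.divX ≠ 0 := fun h => hP (by rw [← hPX, h, mul_zero])
    have hdeg1 : P.natDegree = P.divX.natDegree + 1 := by
      conv_lhs => rw [← hPX]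
      rw [natDegree_mul X_ne_zero hP1, natDegree_X]
      ring
    have hyp' : Hyp P.divX Q := by
      apply hyp.mono
      rintro z ⟨hz1, hz2⟩
      refine ⟨hz1, ?_⟩
      rw [← hPX, eval_mul, eval_X, norm_mul, hz1, one_mul] at hz2
      exact hz2
    obtain ⟨B₁, B₂, h₁, h₂, hB⟩ := ih P.divX Q hP1 hQ (by omega) hyp'
    refine ⟨fun z => 1 * ((z - 0) / (1 - conj' 0 * z)) * B₁ z, B₂,
      blaschke_mul h₁ (by simp) (by simp), h₂, fun z hz => ?_⟩
    show eval z P * B₂ z = eval z Q * (1 * ((z - 0) / (1 - conj' 0 * z)) * B₁ z)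
    have h0 : 1 * ((z - 0) / (1 - conj' 0 * z)) * B₁ z = z * B₁ z := by simp
    rw [h0, ← hPX, eval_mul, eval_X]
    linear_combination z * hB z hz
  · by_cases hQa : Q.eval a = 0
    · -- common root
      obtain ⟨P₁, hP₁⟩ := Polynomial.dvd_iff_isRoot.mpr haR
      obtain ⟨Q₁, hQ₁⟩ := Polynomial.dvd_iff_isRoot.mpr (hQa : Q.IsRoot a)
      have hP1 : P₁ ≠ 0 := fun h => hP (by rw [hP₁, h, mul_zero])
      have hQ1 : Q₁ ≠ 0 := fun h => hQ (by rw [hQ₁, h, mul_zero])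
      have hdP1 : P.natDegree = P₁.natDegree + 1 := by
        rw [hP₁, natDegree_mul (X_sub_C_ne_zero a) hP1, natDegree_X_sub_C]; ring
      have hdQ1 : Q.natDegree = Q₁.natDegree + 1 := by
        rw [hQ₁, natDegree_mul (X_sub_C_ne_zero a) hQ1, natDegree_X_sub_C]; ring
      have hyp' : Hyp P₁ Q₁ := by
        apply ((hyp.diff (Set.finite_singleton a)).mono)
        rintro z ⟨⟨hz1, hz2⟩, hza⟩
        have hza' : z ≠ a := by simpa using hza
        refine ⟨hz1, ?_⟩
        rw [hP₁, hQ₁, eval_mul, eval_mul, eval_sub, eval_X, eval_C, norm_mul, norm_mul] at hz2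
        exact mul_left_cancel₀ (by simpa [sub_eq_zero] using hza') hz2
      obtain ⟨B₁, B₂, h₁, h₂, hB⟩ := ih P₁ Q₁ hP1 hQ1 (by omega) hyp'
      refine ⟨B₁, B₂, h₁, h₂, fun z hz => ?_⟩
      rw [hP₁, hQ₁, eval_mul, eval_mul, eval_sub, eval_X, eval_C]
      linear_combination (z - a) * hB z hz
    · rcases key_root hyp ha0 haR with h | hb
      · exact absurd h hQa
      · have hca : conj' a ≠ 0 := by simpa using ha0
        set b := (conj' a)⁻¹ with hbdef
        have hb0 : b ≠ 0 := inv_ne_zero hca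
        have habsa : ‖a‖ ≠ 0 := by simpa using ha0
        have habsb : ‖b‖ = (‖a‖)⁻¹ := by
          rw [hbdef, norm_inv, Complex.norm_conj]
        have hane : ‖a‖ ≠ 1 := by
          intro h1
          apply hQa
          have hba : b = a := by
            have h1' : a * conj' a = 1 := by
              rw [Complex.mul_conj, Complex.normSq_eq_norm_sq, h1]; norm_num
            rw [hbdef, inv_eq_iff_eq_inv]
            exact eq_inv_of_mul_eq_one_left (by linear_combination h1')
          rwa [hba] at hb
        obtain ⟨P₁, hP₁⟩ := Polynomial.dvd_iff_isRoot.mpr haR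
        obtain ⟨Q₁, hQ₁⟩ := Polynomial.dvd_iff_isRoot.mpr (hb : Q.IsRoot b)
        have hP1 : P₁ ≠ 0 := fun h => hP (by rw [hP₁, h, mul_zero])
        have hQ1 : Q₁ ≠ 0 := fun h => hQ (by rw [hQ₁, h, mul_zero])
        have hdP1 : P.natDegree = P₁.natDegree + 1 := by
          rw [hP₁, natDegree_mul (X_sub_C_ne_zero a) hP1, natDegree_X_sub_C]; ring
        have hdQ1 : Q.natDegree = Q₁.natDegree + 1 := by
          rw [hQ₁, natDegree_mul (X_sub_C_ne_zero b) hQ1, natDegree_X_sub_C]; ring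
        rcases lt_or_gt_of_ne hane with hlt | hgt
        · -- |a| < 1
          have hyp' : Hyp (Polynomial.C a * P₁) Q₁ := by
            apply hyp.mono
            rintro z ⟨hz1, hz2⟩
            have hza : ‖z - a‖ ≠ 0 := by
              rw [norm_ne_zero_iff, sub_ne_zero]
              intro h; rw [← h] at hane; exact hane hz1
            refine ⟨hz1, ?_⟩
            rw [hP₁, hQ₁, eval_mul, eval_mul, eval_sub, eval_X, eval_C, eval_sub, eval_X,
              eval_C, norm_mul, norm_mul, hbdef, abs_sub_inv_conj ha0 hz1] at hz2
            rw [eval_mul, eval_C, norm_mul]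
            have h3 : ‖eval z P₁‖ = ‖eval z Q₁‖ / ‖a‖ :=
              mul_left_cancel₀ hza (by rw [hz2]; ring)
            rw [h3]
            field_simp
          obtain ⟨B₁, B₂, h₁, h₂, hB⟩ := ih (Polynomial.C a * P₁) Q₁
            (mul_ne_zero (by simpa using ha0) hP1) hQ1
            (by rw [natDegree_C_mul ha0]; omega) hyp'
          refine ⟨fun z => (-(conj' a) / a) * ((z - a) / (1 - conj' a * z)) * B₁ z, B₂,
            blaschke_mul h₁ (by rw [norm_div, norm_neg, Complex.norm_conj,
              div_self habsa]) hlt, h₂, fun z hz => ?_⟩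
          show eval z P * B₂ z
            = eval z Q * ((-(conj' a) / a) * ((z - a) / (1 - conj' a * z)) * B₁ z)
          have hD : 1 - conj' a * z ≠ 0 := one_sub_conj_ne hlt hz
          have hB' := hB z hz
          rw [eval_mul, eval_C] at hB'
          rw [hP₁, hQ₁, eval_mul, eval_mul, eval_sub, eval_X, eval_C, eval_sub, eval_X,
            eval_C, hbdef]
          have e1 : (z - (conj' a)⁻¹) * (-(conj' a)) = 1 - conj' a * z := by
            field_simp; ring
          have key : (z - (conj' a)⁻¹) * ((-(conj' a) / a) * ((z - a) / (1 - conj' a * z)))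
              = (z - a) / a := by
            have expand : (z - (conj' a)⁻¹) * ((-(conj' a) / a) * ((z - a) / (1 - conj' a * z)))
                = (((z - (conj' a)⁻¹) * (-(conj' a))) / (1 - conj' a * z)) * ((z - a) / a) := by
              ring
            rw [expand, e1, div_self hD, one_mul]
          have e2 : (z - (conj' a)⁻¹) * eval z Q₁
                * ((-(conj' a) / a) * ((z - a) / (1 - conj' a * z)) * B₁ z)
              = (eval z Q₁ * B₁ z)
                * ((z - (conj' a)⁻¹) * ((-(conj' a) / a) * ((z - a) / (1 - conj' a * z)))) := by
            ring
          rw [e2, key, ← hB']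
          field_simp
        · -- |a| > 1
          have hblt : ‖b‖ < 1 := by
            rw [habsb]
            rw [inv_lt_one_iff₀]
            right; exact hgt
          have hcb : conj' b ≠ 0 := by simpa using hb0
          have habsb0 : ‖b‖ ≠ 0 := by simpa using hb0
          have hab : a = (conj' b)⁻¹ := by
            rw [hbdef, map_inv₀, Complex.conj_conj, inv_inv]
          have hyp' : Hyp P₁ (Polynomial.C b * Q₁) := by
            apply hyp.mono
            rintro z ⟨hz1, hz2⟩
            have hzb : ‖z - b‖ ≠ 0 := by
              rw [norm_ne_zero_iff, sub_ne_zero]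
              intro h; rw [← h, hz1] at hblt; exact lt_irrefl _ hblt
            refine ⟨hz1, ?_⟩
            rw [hP₁, hQ₁, eval_mul, eval_mul, eval_sub, eval_X, eval_C, eval_sub, eval_X,
              eval_C, norm_mul, norm_mul, hab, abs_sub_inv_conj hb0 hz1] at hz2
            rw [eval_mul, eval_C, norm_mul]
            have h3 : ‖eval z P₁‖ / ‖b‖ = ‖eval z Q₁‖ :=
              mul_left_cancel₀ hzb (by rw [← hz2]; ring)
            rw [← h3]
            field_simp
          obtain ⟨B₁, B₂, h₁, h₂, hB⟩ := ih P₁ (Polynomial.C b * Q₁) hP1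
            (mul_ne_zero (by simpa using hb0) hQ1)
            (by rw [natDegree_C_mul hb0]; omega) hyp'
          refine ⟨B₁, fun z => (-(conj' b) / b) * ((z - b) / (1 - conj' b * z)) * B₂ z, h₁,
            blaschke_mul h₂ (by rw [norm_div, norm_neg, Complex.norm_conj,
              div_self habsb0]) hblt, fun z hz => ?_⟩
          show eval z P * ((-(conj' b) / b) * ((z - b) / (1 - conj' b * z)) * B₂ z)
            = eval z Q * B₁ z
          have hD : 1 - conj' b * z ≠ 0 := one_sub_conj_ne hblt hz
          have hB' := hB z hz
          rw [eval_mul, eval_C] at hB'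
          rw [hP₁, hQ₁, eval_mul, eval_mul, eval_sub, eval_X, eval_C, eval_sub, eval_X,
            eval_C, hab]
          have e1 : (z - (conj' b)⁻¹) * (-(conj' b)) = 1 - conj' b * z := by
            field_simp; ring
          have key : (z - (conj' b)⁻¹) * ((-(conj' b) / b) * ((z - b) / (1 - conj' b * z)))
              = (z - b) / b := by
            have expand : (z - (conj' b)⁻¹) * ((-(conj' b) / b) * ((z - b) / (1 - conj' b * z)))
                = (((z - (conj' b)⁻¹) * (-(conj' b))) / (1 - conj' b * z)) * ((z - b) / b) := by
              ring
            rw [expand, e1, div_self hD, one_mul]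
          have e2 : (z - (conj' b)⁻¹) * eval z P₁
                * ((-(conj' b) / b) * ((z - b) / (1 - conj' b * z)) * B₂ z)
              = (eval z P₁ * B₂ z)
                * ((z - (conj' b)⁻¹) * ((-(conj' b) / b) * ((z - b) / (1 - conj' b * z)))) := by
            ring
          rw [e2, key, hB']
          field_simp

lemma main : ∀ n : ℕ, ∀ P Q : Polynomial ℂ, P ≠ 0 → Q ≠ 0 →
    P.natDegree + Q.natDegree ≤ n → Hyp P Q → Concl P Q := by
  intro n
  induction n with
  | zero =>
    intro P Q hP hQ hsum hyp
    exact base P Q hP hQ (by omega) (by omega) hyp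
  | succ n ih =>
    intro P Q hP hQ hsum hyp
    by_cases hdP : 1 ≤ P.natDegree
    · exact step n ih P Q hP hQ hdP hsum hyp
    · by_cases hdQ : 1 ≤ Q.natDegree
      · obtain ⟨B₁, B₂, h₁, h₂, hB⟩ :=
          step n ih Q P hQ hP hdQ (by omega) (hyp_symm hyp)
        exact ⟨B₂, B₁, h₂, h₁, fun z hz => (hB z hz).symm⟩
      · exact base P Q hP hQ (by omega) (by omega) hyp

/-- A rational function of modulus one on the unit circle is a quotient of two
finite Blaschke products. -/
theorem rational_circle_preserving_is_quotient_blaschke (P Q : Polynomial ℂ) (hQ : Q ≠ 0)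
    (h : ∀ z : ℂ, ‖z‖ = 1 → Q.eval z ≠ 0 →
      ‖P.eval z / Q.eval z‖ = 1) :
    ∃ B₁ B₂ : ℂ → ℂ, IsFiniteBlaschke B₁ ∧ IsFiniteBlaschke B₂ ∧
      ∀ z : ℂ, ‖z‖ ≤ 1 → P.eval z * B₂ z = Q.eval z * B₁ z := by
  have hinf : ({z : ℂ | ‖z‖ = 1} \ {z : ℂ | Q.IsRoot z}).Infinite :=
    circle_infinite.diff (Polynomial.finite_setOf_isRoot hQ)
  by_cases hP : P = 0
  · exfalso
    obtain ⟨z, hz1, hz2⟩ := hinf.nonempty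
    have := h z hz1 hz2
    rw [hP] at this
    simp at this
  · have hyp : Hyp P Q := by
      apply hinf.mono
      rintro z ⟨hz1, hz2⟩
      have hz2' : Q.eval z ≠ 0 := hz2
      refine ⟨hz1, ?_⟩
      have := h z hz1 hz2'
      rw [norm_div] at this
      have hQz : ‖Q.eval z‖ ≠ 0 := by simpa using hz2'
      field_simp at this
      exact this
    exact main (P.natDegree + Q.natDegree) P Q hP hQ le_rfl hyp
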